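/- Let t be an n-ary idempotent polymorphism of the digraph D, let d₁,…,dₙ ∈ {0,1,2}, and let I = {i : dᵢ = 2}. Then t(d₁,…,dₙ) = 2 if and only if I is a major subset for t. -/
import Mathlib


namespace DigraphHM11

/-- `f` is a polymorphism of the digraph `(V, E)`. -/
def IsPoly {V : Type*} (E : V → V → Prop) {n : ℕ} (f : (Fin n → V) → V) : Prop :=
  ∀ a b : Fin n → V, (∀ i, E (a i) (b i)) → E (f a) (f b)

/-- `f` is idempotent. -/
def IsIdem {V : Type*} {n : ℕ} (f : (Fin n → V) → V) : Prop :=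
  ∀ x : V, f (fun _ => x) = x

/-- The reflexive digraph `D` on `{0,1,2}` with non-loop edges
`0 → 1`, `1 → 0`, `1 → 2`, `2 → 0`. -/
def DEdge : Fin 3 → Fin 3 → Prop := fun a b =>
  a = b ∨ (a = 0 ∧ b = 1) ∨ (a = 1 ∧ b = 0) ∨ (a = 1 ∧ b = 2) ∨ (a = 2 ∧ b = 0)

/-- `I` is a major subset for `t`: there is a tuple `c` with `t(c) = 2` whose set of
coordinates equal to `2` is exactly `I`. -/
def IsMajor {n : ℕ} (t : (Fin n → Fin 3) → Fin 3) (I : Finset (Fin n)) : Prop :=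
  ∃ c : Fin n → Fin 3, t c = 2 ∧ I = Finset.univ.filter (fun i => c i = 2)

/-- For an idempotent polymorphism `t` of `D` and a tuple `d`, `t(d) = 2` iff the set
`{i : dᵢ = 2}` is a major subset for `t`. -/
theorem eq_two_iff_isMajor {n : ℕ}
    (t : (Fin n → Fin 3) → Fin 3) (hpoly : IsPoly DEdge t) (hidem : IsIdem t)
    (d : Fin n → Fin 3) :
    t d = 2 ↔ IsMajor t (Finset.univ.filter fun i => d i = 2) := by
  constructor
  · intro h
    exact ⟨d, h, rfl⟩
  · rintro ⟨c, hc2, hset⟩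
    have hiff : ∀ i, d i = 2 ↔ c i = 2 := by
      intro i
      have := Finset.ext_iff.mp hset i
      simpa using this
    have hedge : ∀ x y : Fin 3, (x = 2 ↔ y = 2) → DEdge x y := by unfold DEdge; decide
    have h1 : DEdge (t c) (t d) :=
      hpoly c d (fun i => hedge _ _ ((hiff i).symm))
    have h2 : DEdge (t d) (t c) :=
      hpoly d c (fun i => hedge _ _ (hiff i))
    rw [hc2] at h1 h2
    revert h1 h2
    have : ∀ x : Fin 3, DEdge 2 x → DEdge x 2 → x = 2 := by unfold DEdge; decide
    exact this (t d)

end DigraphHM11
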